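/- arXiv:1709.05135 — 5 statements merged into one kernel-verified Lean document; each statement's English description precedes it below -/
import Mathlib

section
/- Under the setting of the incremental Cholesky update: with d_i² = L_{ii} − ‖c_i‖² and e_i = (L_{ji} − ⟨c_j,c_i⟩)/d_j, the updated quantity d_i'² := L_{ii} − ‖c_i‖² − e_i² satisfies d_i'² = det(L_{Y∪{j}∪{i}})/det(L_{Y∪{j}}), i.e., the update d_i'² = d_i² − e_i² correctly computes the new determinant ratio. -/
open Matrix

/-- Principal submatrix of `L` indexed by the finite set `Y`. -/
def pSub {M : ℕ} (L : Matrix (Fin M) (Fin M) ℝ) (Y : Finset (Fin M)) :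
    Matrix Y Y ℝ := Matrix.of fun a b => L a.1 b.1

/-- The principal submatrix on `Y ∪ {j}`, with `j` ordered last. -/
def pSubExt {M : ℕ} (L : Matrix (Fin M) (Fin M) ℝ) (Y : Finset (Fin M)) (j : Fin M) :
    Matrix (Y ⊕ Unit) (Y ⊕ Unit) ℝ :=
  Matrix.fromBlocks (pSub L Y) (Matrix.of fun (a : Y) (_ : Unit) => L a.1 j)
    (Matrix.of fun (_ : Unit) (a : Y) => L j a.1)
    (Matrix.of fun (_ _ : Unit) => L j j)

theorem d2_update_eq_det_ratio
    {M : ℕ} (L : Matrix (Fin M) (Fin M) ℝ) (hL : L.PosSemidef)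
    (Y : Finset (Fin M)) (hY : 0 < (pSub L Y).det)
    (V : Matrix Y Y ℝ)
    (hVlow : ∀ a b : Y, (a : Fin M) < (b : Fin M) → V a b = 0)
    (hVinv : IsUnit V.det)
    (hChol : pSub L Y = V * Vᵀ)
    (i j : Fin M) (hi : i ∉ Y) (hj : j ∉ Y) (hij : i ≠ j)
    (ci cj : Y → ℝ)
    (hci : V.mulVec ci = fun a : Y => L a.1 i)
    (hcj : V.mulVec cj = fun a : Y => L a.1 j)
    (dj : ℝ) (hdjpos : 0 < dj)
    (hdj : dj ^ 2 = L j j - ∑ a : Y, (cj a) ^ 2)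
    (hdetYj : 0 < (pSubExt L Y j).det)
    (ei : ℝ) (hei : ei = (L j i - ∑ a : Y, cj a * ci a) / dj) :
    L i i - ∑ a : Y, (ci a) ^ 2 - ei ^ 2
      = (Matrix.fromBlocks (pSubExt L Y j)
          (Matrix.of fun (a : Y ⊕ Unit) (_ : Unit) =>
            Sum.elim (fun y : Y => L y.1 i) (fun _ => L j i) a)
          (Matrix.of fun (_ : Unit) (a : Y ⊕ Unit) =>
            Sum.elim (fun y : Y => L i y.1) (fun _ => L i j) a)
          (Matrix.of fun (_ _ : Unit) => L i i)).det / (pSubExt L Y j).det := by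
  have hsym : ∀ a b : Fin M, L a b = L b a := fun a b => by simpa using (hL.1.apply a b).symm
  have hdjne : dj ≠ 0 := ne_of_gt hdjpos
  set A := pSubExt L Y j with hAdef
  -- extended Cholesky factor
  set W : Matrix (↥Y ⊕ Unit) (↥Y ⊕ Unit) ℝ :=
    Matrix.fromBlocks V 0 (Matrix.of fun _ (a : Y) => cj a)
      (Matrix.of fun _ _ => dj) with hW
  have hChol' : ∀ a b : Y, L a.1 b.1 = ∑ x : Y, V a x * V b x := by
    intro a b
    have := congrFun (congrFun hChol a) b
    simpa [pSub, Matrix.mul_apply] using this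
  have hcj' : ∀ a : Y, ∑ x : Y, V a x * cj x = L a.1 j := by
    intro a
    have := congrFun hcj a
    simpa [Matrix.mulVec, dotProduct] using this
  have hci' : ∀ a : Y, ∑ x : Y, V a x * ci x = L a.1 i := by
    intro a
    have := congrFun hci a
    simpa [Matrix.mulVec, dotProduct] using this
  have hWA : A = W * Wᵀ := by
    ext a b
    cases a with
    | inl a =>
      cases b with
      | inl b =>
        simp [hAdef, pSubExt, pSub, hW, Matrix.mul_apply, Fintype.sum_sum_type,
          hChol' a b]
      | inr b =>
        simp only [hAdef, pSubExt, hW, Matrix.mul_apply, Fintype.sum_sum_type,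
          Matrix.fromBlocks_apply₁₂, Matrix.fromBlocks_apply₁₁,
          Matrix.transpose_apply, Matrix.of_apply, Matrix.zero_apply,
          Fintype.sum_unique, mul_zero, zero_mul, add_zero, zero_add]
        exact (hcj' a).symm
    | inr a =>
      cases b with
      | inl b =>
        have h := hcj' b
        simp only [hAdef, pSubExt, hW, Matrix.mul_apply, Fintype.sum_sum_type,
          Matrix.fromBlocks_apply₂₁, Matrix.fromBlocks_apply₁₁,
          Matrix.fromBlocks_apply₂₂, Matrix.fromBlocks_apply₁₂,
          Matrix.transpose_apply, Matrix.of_apply, Matrix.zero_apply,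
          Fintype.sum_unique, mul_zero, zero_mul, add_zero, zero_add]
        rw [hsym j b, ← h]
        exact Finset.sum_congr rfl fun x _ => mul_comm _ _
      | inr b =>
        have h : dj * dj = L j j - ∑ a : Y, cj a * cj a := by
          have := hdj; rw [pow_two] at this
          simpa [pow_two] using this
        simp only [hAdef, pSubExt, hW, Matrix.mul_apply, Fintype.sum_sum_type,
          Matrix.fromBlocks_apply₂₂, Matrix.fromBlocks_apply₂₁,
          Matrix.transpose_apply, Matrix.of_apply, Fintype.sum_unique]
        rw [h]; ring
  have hdetW : IsUnit W.det := by
    have hdA : A.det = W.det * W.det := by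
      rw [hWA, Matrix.det_mul, Matrix.det_transpose]
    refine isUnit_iff_ne_zero.mpr ?_
    intro h
    rw [h, mul_zero] at hdA
    exact absurd hdA (ne_of_gt (by simpa [hAdef] using hdetYj))
  have hdetA : IsUnit A.det := by
    exact isUnit_iff_ne_zero.mpr (ne_of_gt hdetYj)
  haveI : Invertible A := A.invertibleOfIsUnitDet hdetA
  -- the vectors
  set b : (↥Y ⊕ Unit) → ℝ := Sum.elim (fun y : Y => L y.1 i) (fun _ => L j i) with hb
  set u : (↥Y ⊕ Unit) → ℝ := Sum.elim ci (fun _ => ei) with hu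
  have hWu : W.mulVec u = b := by
    funext a
    cases a with
    | inl a =>
      simp only [hW, hb, hu, Matrix.mulVec, dotProduct, Fintype.sum_sum_type,
        Matrix.fromBlocks_apply₁₁, Matrix.fromBlocks_apply₁₂, Sum.elim_inl, Sum.elim_inr,
        Matrix.zero_apply, zero_mul, Finset.sum_const_zero, add_zero, Fintype.sum_unique]
      have := congrFun hci a
      simp only [Matrix.mulVec, dotProduct] at this
      simpa using this
    | inr a =>
      simp only [hW, hb, hu, Matrix.mulVec, dotProduct, Fintype.sum_sum_type,
        Matrix.fromBlocks_apply₂₁, Matrix.fromBlocks_apply₂₂, Sum.elim_inl, Sum.elim_inr,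
        Matrix.of_apply, Fintype.sum_unique]
      rw [hei]
      field_simp
      ring
  -- key dot product computation
  have hkey : ∀ M1 : Matrix Unit Unit ℝ,
      M1 = (Matrix.of fun (_ : Unit) (a : Y ⊕ Unit) => b a) * A⁻¹ *
        (Matrix.of fun (a : Y ⊕ Unit) (_ : Unit) => b a) →
      M1 () () = ∑ a : Y, (ci a)^2 + ei^2 := by
    intro M1 hM1
    have h1 : M1 () () = (b ᵥ* A⁻¹) ⬝ᵥ b := by
      rw [hM1]
      simp [Matrix.mul_apply, Matrix.vecMul, dotProduct]
    have hAinv : A⁻¹ = (Wᵀ)⁻¹ * W⁻¹ := by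
      rw [hWA, Matrix.mul_inv_rev]
    have h2 : A⁻¹.mulVec b = (Wᵀ)⁻¹.mulVec u := by
      rw [hAinv, ← hWu, Matrix.mulVec_mulVec, Matrix.mul_assoc,
        Matrix.nonsing_inv_mul W hdetW, Matrix.mul_one]
    rw [h1, ← Matrix.dotProduct_mulVec, h2, Matrix.dotProduct_mulVec]
    have h3 : b ᵥ* (Wᵀ)⁻¹ = u := by
      rw [← Matrix.transpose_nonsing_inv, Matrix.vecMul_transpose, ← hWu,
        Matrix.mulVec_mulVec, Matrix.nonsing_inv_mul W hdetW, Matrix.one_mulVec]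
    rw [h3, hu]
    simp [dotProduct, Fintype.sum_sum_type, pow_two]
  -- replace the big row/column blocks by b
  have hCol : (Matrix.of fun (a : Y ⊕ Unit) (_ : Unit) =>
      Sum.elim (fun y : Y => L y.1 i) (fun _ => L j i) a) =
      (Matrix.of fun (a : Y ⊕ Unit) (_ : Unit) => b a) := rfl
  have hRow : (Matrix.of fun (_ : Unit) (a : Y ⊕ Unit) =>
      Sum.elim (fun y : Y => L i y.1) (fun _ => L i j) a) =
      (Matrix.of fun (_ : Unit) (a : Y ⊕ Unit) => b a) := by
    ext _ a
    cases a with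
    | inl a => exact hsym i a
    | inr a => exact hsym i j
  rw [hRow, hCol]
  have hAne : A.det ≠ 0 := ne_of_gt hdetYj
  rw [Matrix.det_fromBlocks₁₁, Matrix.invOf_eq_nonsing_inv]
  have hdd : ((Matrix.of fun (_ _ : Unit) => L i i)
      - (Matrix.of fun (_ : Unit) (a : ↥Y ⊕ Unit) => b a) * A⁻¹ *
        (Matrix.of fun (a : ↥Y ⊕ Unit) (_ : Unit) => b a)).det
      = L i i - (∑ a : Y, (ci a)^2 + ei^2) := by
    rw [Matrix.det_unique, Matrix.sub_apply, hkey _ rfl]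
    rfl
  rw [hdd, mul_comm, mul_div_assoc, div_self hAne, mul_one]
  ring
end

section
/- Let A be an n×n symmetric positive definite matrix with Cholesky factorization A = V Vᵀ (V lower triangular with positive diagonal), and let v ∈ ℝⁿ. Then A + v vᵀ is positive definite and its Cholesky factor V' satisfies: V'₁₁ = sqrt(V₁₁² + v₁²), V'_{2:,1} = (V_{2:,1} V₁₁ + v_{2:} v₁)/V'₁₁, and the trailing block satisfies V'_{2:} V'_{2:}ᵀ = V_{2:} V_{2:}ᵀ + v' v'ᵀ with v' = (v_{2:} V'₁₁ − V'_{2:,1} v₁)/V₁₁. -/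
open Matrix

theorem rank_one_cholesky_update
    {n : ℕ} (A : Matrix (Fin (n + 1)) (Fin (n + 1)) ℝ) (hA : A.PosDef)
    (V : Matrix (Fin (n + 1)) (Fin (n + 1)) ℝ)
    (hVlow : ∀ i j : Fin (n + 1), i < j → V i j = 0)
    (hVdiag : ∀ i, 0 < V i i)
    (hChol : A = V * Vᵀ)
    (v : Fin (n + 1) → ℝ)
    (V' : Matrix (Fin (n + 1)) (Fin (n + 1)) ℝ)
    (hV'low : ∀ i j : Fin (n + 1), i < j → V' i j = 0)
    (hV'diag : ∀ i, 0 < V' i i)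
    (hChol' : A + Matrix.vecMulVec v v = V' * V'ᵀ)
    (v' : Fin n → ℝ)
    (hv' : ∀ k : Fin n, v' k = (v k.succ * V' 0 0 - V' k.succ 0 * v 0) / V 0 0) :
    (A + Matrix.vecMulVec v v).PosDef
    ∧ V' 0 0 = Real.sqrt ((V 0 0) ^ 2 + (v 0) ^ 2)
    ∧ (∀ k : Fin n, V' k.succ 0 = (V k.succ 0 * V 0 0 + v k.succ * v 0) / V' 0 0)
    ∧ (Matrix.of fun k l : Fin n => V' k.succ l.succ)
        * (Matrix.of fun k l : Fin n => V' k.succ l.succ)ᵀ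
      = (Matrix.of fun k l : Fin n => V k.succ l.succ)
          * (Matrix.of fun k l : Fin n => V k.succ l.succ)ᵀ
        + Matrix.vecMulVec v' v' := by
  have ha : V 0 0 ≠ 0 := (hVdiag 0).ne'
  have hb : V' 0 0 ≠ 0 := (hV'diag 0).ne'
  -- entry expansion
  have expand : ∀ (W : Matrix (Fin (n + 1)) (Fin (n + 1)) ℝ) (i j : Fin (n + 1)),
      (W * Wᵀ) i j = W i 0 * W j 0 + ∑ m : Fin n, W i m.succ * W j m.succ := by
    intro W i j
    simp [Matrix.mul_apply, Fin.sum_univ_succ]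
  -- key entry equations
  have h00 : (V' 0 0) ^ 2 = (V 0 0) ^ 2 + (v 0) ^ 2 := by
    have e := congrFun (congrFun hChol' 0) 0
    have e0 := congrFun (congrFun hChol 0) 0
    rw [expand] at e
    rw [expand] at e0
    simp only [Matrix.add_apply, Matrix.vecMulVec_apply] at e
    have z : ∀ m : Fin n, V' (0 : Fin (n+1)) m.succ = 0 := fun m =>
      hV'low 0 m.succ (Fin.succ_pos m)
    have z0 : ∀ m : Fin n, V (0 : Fin (n+1)) m.succ = 0 := fun m =>
      hVlow 0 m.succ (Fin.succ_pos m)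
    simp [z, z0] at e e0
    nlinarith [e, e0]
  have hkey : ∀ k : Fin n, V' k.succ 0 * V' 0 0 = V k.succ 0 * V 0 0 + v k.succ * v 0 := by
    intro k
    have e := congrFun (congrFun hChol' k.succ) 0
    have e0 := congrFun (congrFun hChol k.succ) 0
    rw [expand] at e
    rw [expand] at e0
    simp only [Matrix.add_apply, Matrix.vecMulVec_apply] at e
    have z : ∀ m : Fin n, V' (0 : Fin (n+1)) m.succ = 0 := fun m =>
      hV'low 0 m.succ (Fin.succ_pos m)
    have z0 : ∀ m : Fin n, V (0 : Fin (n+1)) m.succ = 0 := fun m =>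
      hVlow 0 m.succ (Fin.succ_pos m)
    simp [z, z0] at e e0
    linarith [e, e0]
  refine ⟨?_, ?_, ?_, ?_⟩
  · refine hA.add_posSemidef ?_
    refine Matrix.posSemidef_iff_dotProduct_mulVec.mpr ⟨?_, ?_⟩
    · ext i j
      simp [Matrix.vecMulVec_apply, mul_comm]
    · intro x
      have hmv : ∀ i, (Matrix.vecMulVec v v *ᵥ x) i = v i * (v ⬝ᵥ x) := by
        intro i
        simp [Matrix.mulVec, Matrix.vecMulVec_apply, dotProduct, Finset.mul_sum, mul_assoc]
      have : star x ⬝ᵥ (Matrix.vecMulVec v v *ᵥ x) = (v ⬝ᵥ x) * (v ⬝ᵥ x) := by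
        simp only [dotProduct, hmv]
        simp only [← mul_assoc, ← Finset.sum_mul]
        congr 1
        exact Finset.sum_congr rfl fun i _ => mul_comm _ _
      rw [this]
      exact mul_self_nonneg _
  · rw [← Real.sqrt_sq (hV'diag 0).le, h00]
  · intro k
    rw [eq_div_iff hb]
    exact hkey k
  · ext k l
    simp only [Matrix.mul_apply, Matrix.add_apply, Matrix.transpose_apply,
      Matrix.of_apply, Matrix.vecMulVec_apply]
    have e := congrFun (congrFun hChol' k.succ) l.succ
    have e0 := congrFun (congrFun hChol k.succ) l.succ
    rw [expand] at e
    rw [expand] at e0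
    simp only [Matrix.add_apply, Matrix.vecMulVec_apply] at e
    have hvk : v' k * V 0 0 = v k.succ * V' 0 0 - V' k.succ 0 * v 0 := by
      rw [hv' k]; field_simp
    have hvl : v' l * V 0 0 = v l.succ * V' 0 0 - V' l.succ 0 * v 0 := by
      rw [hv' l]; field_simp
    have hk := hkey k
    have hl := hkey l
    have ha2 : (V 0 0) ^ 2 ≠ 0 := pow_ne_zero 2 ha
    have main : (∑ m : Fin n, V' k.succ m.succ * V' l.succ m.succ) * (V 0 0) ^ 2
        = (∑ m : Fin n, V k.succ m.succ * V l.succ m.succ + v' k * v' l) * (V 0 0) ^ 2 := by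
      have hx : v' k * V 0 0 * (v' l * V 0 0) =
          (v k.succ * V' 0 0 - V' k.succ 0 * v 0) * (v l.succ * V' 0 0 - V' l.succ 0 * v 0) := by
        rw [hvk, hvl]
      linear_combination (V 0 0 ^ 2) * e0 - (V 0 0 ^ 2) * e - hx
        - (v k.succ * v l.succ - V' k.succ 0 * V' l.succ 0) * h00
        - (V' l.succ 0 * V' 0 0 - v l.succ * v 0) * hk - (V k.succ 0 * V 0 0) * hl
    exact mul_right_cancel₀ ha2 main
end

section
/- Greedy gains are positive exactly up to the rank: in the greedy selection on a positive semidefinite matrix L (jₖ maximizing det(L_{V_{k−1}∪{i}})/det(L_{V_{k−1}})), the gain d_{j_k}² > 0 if and only if k ≤ rank(L). -/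
open Matrix Submodule Module

section helpers

lemma psd_det_nonneg {n : Type*} [Fintype n] [DecidableEq n] {A : Matrix n n ℝ}
    (hA : A.PosSemidef) : 0 ≤ A.det := by
  rw [hA.isHermitian.det_eq_prod_eigenvalues]
  exact Finset.prod_nonneg fun i _ => by simpa using hA.eigenvalues_nonneg i

lemma det_ne_zero_of_rank_eq {n : Type*} [Fintype n] [DecidableEq n] {A : Matrix n n ℝ}
    (h : A.rank = Fintype.card n) : A.det ≠ 0 := by
  intro h0
  obtain ⟨v, hv, hmv⟩ := (Matrix.exists_mulVec_eq_zero_iff).2 h0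
  have hker : v ∈ LinearMap.ker A.mulVecLin := hmv
  have hsum : finrank ℝ (LinearMap.range A.mulVecLin) + finrank ℝ (LinearMap.ker A.mulVecLin)
      = Fintype.card n := by
    have := LinearMap.finrank_range_add_finrank_ker A.mulVecLin
    rwa [Module.finrank_fintype_fun_eq_card] at this
  have hkpos : 0 < finrank ℝ (LinearMap.ker A.mulVecLin) := by
    rw [finrank_pos_iff]
    exact ⟨⟨⟨v, hker⟩, 0, by simp [hv, Subtype.ext_iff]⟩⟩
  unfold Matrix.rank at h
  omega

end helpers

namespace Matrix.PosSemidef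

open scoped MatrixOrder in
/-- Square root of a positive semidefinite matrix (replacement for the removed API). -/
noncomputable def sqrt {n : Type*} [Fintype n] [DecidableEq n] {A : Matrix n n ℝ}
    (_ : A.PosSemidef) : Matrix n n ℝ := CFC.sqrt A

open scoped MatrixOrder in
lemma posSemidef_sqrt {n : Type*} [Fintype n] [DecidableEq n] {A : Matrix n n ℝ}
    (hA : A.PosSemidef) : hA.sqrt.PosSemidef := (CFC.sqrt_nonneg A).posSemidef

open scoped MatrixOrder in
lemma sqrt_mul_self {n : Type*} [Fintype n] [DecidableEq n] {A : Matrix n n ℝ}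
    (hA : A.PosSemidef) : hA.sqrt * hA.sqrt = A := CFC.sqrt_mul_sqrt_self A hA.nonneg

end Matrix.PosSemidef

section aux

variable {M : ℕ} {L : Matrix (Fin M) (Fin M) ℝ}

lemma pSub_eq_submatrix (L : Matrix (Fin M) (Fin M) ℝ) (W : Finset (Fin M)) :
    pSub L W = L.submatrix (Subtype.val : W → Fin M) Subtype.val := rfl

lemma pSub_posSemidef (hL : L.PosSemidef) (W : Finset (Fin M)) : (pSub L W).PosSemidef := by
  rw [pSub_eq_submatrix]; exact hL.submatrix _

lemma pSub_det_nonneg (hL : L.PosSemidef) (W : Finset (Fin M)) : 0 ≤ (pSub L W).det :=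
  psd_det_nonneg (pSub_posSemidef hL W)

lemma sqrt_symm (hL : L.PosSemidef) : hL.sqrtᵀ = hL.sqrt := by
  ext p q
  have := hL.posSemidef_sqrt.1.apply q p
  simp only [RCLike.star_def, starRingEnd_apply, star_trivial] at this
  exact this.symm

lemma key1 (hL : L.PosSemidef) (W : Finset (Fin M)) :
    pSub L W = (hL.sqrt.submatrix id (Subtype.val : W → Fin M))ᵀ *
      (hL.sqrt.submatrix id (Subtype.val : W → Fin M)) := by
  have hsym : ∀ p q, hL.sqrt p q = hL.sqrt q p := fun p q =>
    congrFun (congrFun (sqrt_symm hL) q) p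
  ext a b
  have hmul := congrFun (congrFun hL.sqrt_mul_self a.1) b.1
  simp only [Matrix.mul_apply] at hmul ⊢
  simp only [pSub, Matrix.of_apply, Matrix.transpose_apply, Matrix.submatrix_apply, id]
  rw [← hmul]
  exact Finset.sum_congr rfl fun r _ => by rw [hsym a.1 r]

lemma range_eq (hL : L.PosSemidef) (W : Finset (Fin M)) :
    Set.range ((hL.sqrt.submatrix id (Subtype.val : W → Fin M))ᵀ)
      = (fun i => hL.sqrtᵀ i) '' ↑W := by
  rw [Matrix.transpose_submatrix]
  ext x
  constructor
  · rintro ⟨w, rfl⟩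
    exact ⟨w.1, w.2, rfl⟩
  · rintro ⟨i, hi, rfl⟩
    exact ⟨⟨i, hi⟩, rfl⟩

lemma rank_pSub (hL : L.PosSemidef) (W : Finset (Fin M)) :
    (pSub L W).rank = finrank ℝ (span ℝ ((fun i => hL.sqrtᵀ i) '' ↑W)) := by
  rw [key1 hL W, Matrix.rank_transpose_mul_self, Matrix.rank_eq_finrank_span_cols]
  exact congrArg (fun s => finrank ℝ (span ℝ s)) (range_eq hL W)

lemma rank_L (hL : L.PosSemidef) :
    L.rank = finrank ℝ (span ℝ (Set.range (fun i => hL.sqrtᵀ i))) := by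
  have h1 : L.rank = hL.sqrt.rank := by
    conv_lhs => rw [← hL.sqrt_mul_self]
    rw [show hL.sqrt * hL.sqrt = hL.sqrtᵀ * hL.sqrt from by rw [sqrt_symm hL]]
    exact Matrix.rank_transpose_mul_self _
  rw [h1, Matrix.rank_eq_finrank_span_cols]
  rfl

lemma det_pSub_ne_iff (hL : L.PosSemidef) (W : Finset (Fin M)) :
    (pSub L W).det ≠ 0 ↔ finrank ℝ (span ℝ ((fun i => hL.sqrtᵀ i) '' ↑W)) = W.card := by
  constructor
  · intro h
    rw [← rank_pSub hL W]
    have : IsUnit (pSub L W) := (Matrix.isUnit_iff_isUnit_det _).2 (isUnit_iff_ne_zero.2 h)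
    rw [Matrix.rank_of_isUnit _ this, Fintype.card_coe]
  · intro h
    apply det_ne_zero_of_rank_eq
    rw [rank_pSub hL W, h, Fintype.card_coe]

lemma card_le_rank (hL : L.PosSemidef) (W : Finset (Fin M)) (h : (pSub L W).det ≠ 0) :
    W.card ≤ L.rank := by
  rw [← (det_pSub_ne_iff hL W).1 h, rank_L hL]
  exact Submodule.finrank_mono (span_mono (Set.image_subset_range _ _))

lemma exists_extend (hL : L.PosSemidef) (V : Finset (Fin M))
    (h : (pSub L V).det ≠ 0) (hlt : V.card < L.rank) :
    ∃ i ∉ V, (pSub L (insert i V)).det ≠ 0 := by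
  by_contra hcon
  push_neg at hcon
  set f : Fin M → (Fin M → ℝ) := fun i => hL.sqrtᵀ i with hf
  have hV : finrank ℝ (span ℝ (f '' ↑V)) = V.card := (det_pSub_ne_iff hL V).1 h
  have hsub : ∀ i : Fin M, f i ∈ span ℝ (f '' ↑V) := by
    intro i
    by_cases hi : i ∈ V
    · exact subset_span ⟨i, hi, rfl⟩
    · have hz := hcon i hi
      have hne : ¬ finrank ℝ (span ℝ (f '' ↑(insert i V))) = (insert i V).card := by
        intro hh
        exact ((det_pSub_ne_iff hL _).2 hh) hz
      have hle : finrank ℝ (span ℝ (f '' ↑(insert i V))) ≤ (insert i V).card := by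
        have : f '' ↑(insert i V) = ↑((insert i V).image f) := by simp [Set.image_insert_eq]
        rw [this]
        exact (finrank_span_finset_le_card _).trans (Finset.card_image_le)
      have hcard : (insert i V).card = V.card + 1 := Finset.card_insert_of_notMem hi
      have hle' : finrank ℝ (span ℝ (f '' ↑(insert i V))) ≤ V.card := by omega
      have hmono : span ℝ (f '' ↑V) ≤ span ℝ (f '' ↑(insert i V)) :=
        span_mono (Set.image_mono (by simp [Finset.coe_insert, Set.subset_insert]))
      have heq : span ℝ (f '' ↑V) = span ℝ (f '' ↑(insert i V)) :=
        Submodule.eq_of_le_of_finrank_le hmono (by omega)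
      rw [heq]
      exact subset_span ⟨i, by simp, rfl⟩
  have : L.rank ≤ V.card := by
    rw [rank_L hL, ← hV]
    exact Submodule.finrank_mono (span_le.2 (Set.range_subset_iff.2 hsub))
  omega

end aux
/-- The greedy gain `d_i² = det(L_{Y∪{i}}) / det(L_Y)`. -/
noncomputable def gainD2 {M : ℕ} (L : Matrix (Fin M) (Fin M) ℝ) (Y : Finset (Fin M)) (i : Fin M) : ℝ :=
  (pSub L (insert i Y)).det / (pSub L Y).det

theorem greedy_gain_pos_iff_le_rank
    {M : ℕ} (L : Matrix (Fin M) (Fin M) ℝ) (hL : L.PosSemidef)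
    (j : ℕ → Fin M) (Vset : ℕ → Finset (Fin M))
    (hV0 : Vset 0 = ∅)
    (hVs : ∀ k, k < M → Vset (k + 1) = insert (j k) (Vset k))
    (hnot : ∀ k, k < M → j k ∉ Vset k)
    (hgreedy : ∀ k, k < M → ∀ i : Fin M, i ∉ Vset k →
      gainD2 L (Vset k) i ≤ gainD2 L (Vset k) (j k)) :
    ∀ k, k < M → (0 < gainD2 L (Vset k) (j k) ↔ k < L.rank) := by
  -- cardinalities
  have hcard : ∀ k, k ≤ M → (Vset k).card = k := by
    intro k
    induction k with
    | zero => intro _; simp [hV0]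
    | succ n ih =>
      intro hn
      rw [hVs n (by omega), Finset.card_insert_of_notMem (hnot n (by omega)), ih (by omega)]
  -- positivity of dets up to the rank
  have hD : ∀ k, k ≤ M → k ≤ L.rank → 0 < (pSub L (Vset k)).det := by
    intro k
    induction k with
    | zero =>
      intro _ _
      rw [hV0]
      haveI : IsEmpty ((∅ : Finset (Fin M)) : Finset (Fin M)) := by
        simp [Finset.isEmpty_coe_sort]
        infer_instance
      rw [Matrix.det_isEmpty]
      norm_num
    | succ n ih =>
      intro hn hr
      have hdV : 0 < (pSub L (Vset n)).det := ih (by omega) (by omega)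
      have hlt : (Vset n).card < L.rank := by rw [hcard n (by omega)]; omega
      obtain ⟨i, hiV, hdet⟩ := exists_extend hL (Vset n) hdV.ne' hlt
      have hdet' : 0 < (pSub L (insert i (Vset n))).det :=
        lt_of_le_of_ne (pSub_det_nonneg hL _) (Ne.symm hdet)
      have hgi : 0 < gainD2 L (Vset n) i := div_pos hdet' hdV
      have hgj : 0 < gainD2 L (Vset n) (j n) :=
        lt_of_lt_of_le hgi (hgreedy n (by omega) i hiV)
      have : 0 < (pSub L (insert (j n) (Vset n))).det := by
        have := mul_pos hgj hdV
        rwa [gainD2, div_mul_cancel₀ _ hdV.ne'] at this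
      rwa [hVs n (by omega)]
  intro k hk
  have e1 : gainD2 L (Vset k) (j k)
      = (pSub L (Vset (k + 1))).det / (pSub L (Vset k)).det := by
    rw [gainD2, hVs k hk]
  constructor
  · intro hpos
    rw [e1] at hpos
    have hb : (pSub L (Vset k)).det ≠ 0 := by
      intro h0
      rw [h0, div_zero] at hpos
      exact lt_irrefl _ hpos
    have ha : (pSub L (Vset (k + 1))).det ≠ 0 := by
      intro h0
      rw [h0, zero_div] at hpos
      exact lt_irrefl _ hpos
    have := card_le_rank hL (Vset (k + 1)) ha
    rw [hcard (k + 1) (by omega)] at this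
    omega
  · intro hr
    rw [e1]
    exact div_pos (hD (k + 1) (by omega) (by omega)) (hD k (by omega) (by omega))
end

section
/- The set function f(Y) = log det(L_Y) (with f(∅) = 0) on subsets of {1,…,M} is submodular when L is positive definite: for all Y ⊆ Y' and i ∉ Y', f(Y ∪ {i}) − f(Y) ≥ f(Y' ∪ {i}) − f(Y'). -/
open Matrix

lemma quad_ge {n : Type*} [Fintype n] [DecidableEq n] {A : Matrix n n ℝ} (hA : A.PosDef)
    (u : n → ℝ) (c : ℝ) (x : n → ℝ) :
    c - u ⬝ᵥ A⁻¹ *ᵥ u ≤ x ⬝ᵥ A *ᵥ x + 2 * (u ⬝ᵥ x) + c := by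
  have hdet : IsUnit A.det := isUnit_iff_ne_zero.mpr hA.det_pos.ne'
  have hAu : A *ᵥ (A⁻¹ *ᵥ u) = u := by
    rw [mulVec_mulVec, Matrix.mul_nonsing_inv A hdet, one_mulVec]
  have hAT : Aᵀ = A := by
    have := hA.1
    rwa [Matrix.IsHermitian, conjTranspose_eq_transpose_of_trivial] at this
  have h0 : 0 ≤ (x + A⁻¹ *ᵥ u) ⬝ᵥ A *ᵥ (x + A⁻¹ *ᵥ u) := by
    simpa using hA.posSemidef.dotProduct_mulVec_nonneg (x + A⁻¹ *ᵥ u)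
  have hcross : (A⁻¹ *ᵥ u) ⬝ᵥ A *ᵥ x = u ⬝ᵥ x := by
    rw [dotProduct_mulVec, ← mulVec_transpose, hAT, hAu]
  have hexp : (x + A⁻¹ *ᵥ u) ⬝ᵥ A *ᵥ (x + A⁻¹ *ᵥ u)
      = x ⬝ᵥ A *ᵥ x + 2 * (u ⬝ᵥ x) + u ⬝ᵥ A⁻¹ *ᵥ u := by
    rw [mulVec_add, add_dotProduct, dotProduct_add, dotProduct_add,
      hAu, hcross, dotProduct_comm x u, dotProduct_comm (A⁻¹ *ᵥ u) u]
    ring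
  nlinarith [h0, hexp]

lemma quad_eq {n : Type*} [Fintype n] [DecidableEq n] {A : Matrix n n ℝ} (hA : A.PosDef)
    (u : n → ℝ) (c : ℝ) :
    (-(A⁻¹ *ᵥ u)) ⬝ᵥ A *ᵥ (-(A⁻¹ *ᵥ u)) + 2 * (u ⬝ᵥ (-(A⁻¹ *ᵥ u))) + c
      = c - u ⬝ᵥ A⁻¹ *ᵥ u := by
  have hdet : IsUnit A.det := isUnit_iff_ne_zero.mpr hA.det_pos.ne'
  have hAu : A *ᵥ (A⁻¹ *ᵥ u) = u := by
    rw [mulVec_mulVec, Matrix.mul_nonsing_inv A hdet, one_mulVec]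
  rw [mulVec_neg, dotProduct_neg, neg_dotProduct, dotProduct_neg, hAu,
    dotProduct_comm _ u]
  ring


lemma dot_restrict {M : ℕ} (Z : Finset (Fin M)) (w v : Fin M → ℝ) :
    (fun a : Z => w a.1) ⬝ᵥ (fun a : Z => v a.1) = ∑ j ∈ Z, w j * v j := by
  rw [dotProduct]
  exact Finset.sum_coe_sort Z (fun j => w j * v j)

lemma mulVec_restrict {M : ℕ} (L : Matrix (Fin M) (Fin M) ℝ) (Z : Finset (Fin M))
    (v : Fin M → ℝ) :
    (fun a : Z => v a.1) ⬝ᵥ (pSub L Z) *ᵥ (fun a : Z => v a.1)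
      = ∑ a ∈ Z, ∑ b ∈ Z, v a * (L a b * v b) := by
  rw [dotProduct]
  rw [show (∑ a : Z, v a.1 * ((pSub L Z) *ᵥ (fun a : Z => v a.1)) a)
      = ∑ a : Z, ∑ b ∈ Z, v a.1 * (L a.1 b * v b) from ?_]
  · exact Finset.sum_coe_sort Z (fun a => ∑ b ∈ Z, v a * (L a b * v b))
  · refine Finset.sum_congr rfl fun a _ => ?_
    rw [mulVec, dotProduct, Finset.mul_sum]
    exact Finset.sum_coe_sort Z (fun b => v a.1 * (L a.1 b * v b))

lemma sum_ext {M : ℕ} (Z : Finset (Fin M)) (v : Fin M → ℝ)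
    (hv : ∀ j, j ∉ Z → v j = 0) (g : Fin M → ℝ) :
    ∑ j ∈ Z, g j * v j = ∑ j, g j * v j := by
  refine Finset.sum_subset (Finset.subset_univ Z) fun j _ hj => ?_
  rw [hv j hj, mul_zero]

lemma sum2_ext {M : ℕ} (L : Matrix (Fin M) (Fin M) ℝ) (Z : Finset (Fin M)) (v : Fin M → ℝ)
    (hv : ∀ j, j ∉ Z → v j = 0) :
    ∑ a ∈ Z, ∑ b ∈ Z, v a * (L a b * v b) = ∑ a, ∑ b, v a * (L a b * v b) := by
  have h1 : ∀ a, ∑ b ∈ Z, v a * (L a b * v b) = ∑ b, v a * (L a b * v b) := by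
    intro a
    refine Finset.sum_subset (Finset.subset_univ Z) fun b _ hb => ?_
    rw [hv b hb, mul_zero, mul_zero]
  calc ∑ a ∈ Z, ∑ b ∈ Z, v a * (L a b * v b) = ∑ a ∈ Z, ∑ b, v a * (L a b * v b) :=
        Finset.sum_congr rfl fun a _ => h1 a
    _ = ∑ a, ∑ b, v a * (L a b * v b) := by
        refine Finset.sum_subset (Finset.subset_univ Z) fun a _ ha => ?_
        refine Finset.sum_eq_zero fun b _ => ?_
        rw [hv a ha, zero_mul]

lemma quad_full {M : ℕ} (L : Matrix (Fin M) (Fin M) ℝ) (v : Fin M → ℝ) :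
    v ⬝ᵥ L *ᵥ v = ∑ a, ∑ b, v a * (L a b * v b) := by
  rw [dotProduct]
  refine Finset.sum_congr rfl fun a _ => ?_
  rw [mulVec, dotProduct, Finset.mul_sum]

lemma pSub_posDef {M : ℕ} {L : Matrix (Fin M) (Fin M) ℝ} (hL : L.PosDef)
    (Z : Finset (Fin M)) : (pSub L Z).PosDef := by
  have hsym : ∀ a b, L a b = L b a := by
    intro a b
    conv_lhs => rw [← hL.1]
    simp [conjTranspose_apply]
  refine posDef_iff_dotProduct_mulVec.mpr ⟨?_, ?_⟩
  · ext a b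
    simp [pSub, conjTranspose_apply, hsym a.1 b.1]
  · intro x hx
    set v : Fin M → ℝ := fun j => if h : j ∈ Z then x ⟨j, h⟩ else 0 with hvdef
    have hxv : x = fun a : Z => v a.1 := by
      funext a
      simp [hvdef, a.2]
    have hv : ∀ j, j ∉ Z → v j = 0 := fun j hj => by simp [hvdef, hj]
    have hv0 : v ≠ 0 := by
      intro h
      apply hx
      funext a
      have := congrFun h a.1
      simpa [hvdef, a.2] using this
    have key : star x ⬝ᵥ (pSub L Z) *ᵥ x = v ⬝ᵥ L *ᵥ v := by
      rw [star_trivial, hxv, mulVec_restrict, sum2_ext L Z v hv, quad_full]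
    rw [key]
    simpa using hL.dotProduct_mulVec_pos hv0


noncomputable def uvec {M : ℕ} (L : Matrix (Fin M) (Fin M) ℝ) (i : Fin M)
    (Z : Finset (Fin M)) : Z → ℝ := fun a => L i a.1

noncomputable def schur {M : ℕ} (L : Matrix (Fin M) (Fin M) ℝ) (i : Fin M)
    (Z : Finset (Fin M)) : ℝ :=
  L i i - uvec L i Z ⬝ᵥ (pSub L Z)⁻¹ *ᵥ uvec L i Z

lemma det_insert {M : ℕ} {L : Matrix (Fin M) (Fin M) ℝ} (hL : L.PosDef)
    (hsub : ∀ Z, (pSub L Z).PosDef)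
    (i : Fin M) (Z : Finset (Fin M)) (hi : i ∉ Z) :
    (pSub L (insert i Z)).det = (pSub L Z).det * schur L i Z := by
  have hsym : ∀ a b, L a b = L b a := by
    intro a b
    conv_lhs => rw [← hL.1]
    simp [conjTranspose_apply]
  set e : {x // x ∈ insert i Z} ≃ Z ⊕ PUnit.{1} :=
    (Finset.subtypeInsertEquivOption hi).trans (Equiv.optionEquivSumPUnit _) with he
  have h1 : (pSub L (insert i Z)).det = ((pSub L (insert i Z)).submatrix e.symm e.symm).det :=
    (Matrix.det_submatrix_equiv_self e.symm _).symm
  have hinl : ∀ a : Z, ((e.symm (Sum.inl a) : {x // x ∈ insert i Z}) : Fin M) = a.1 := by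
    intro a
    simp [he, Finset.subtypeInsertEquivOption]
  have hinr : ∀ p : PUnit.{1}, ((e.symm (Sum.inr p) : {x // x ∈ insert i Z}) : Fin M) = i := by
    intro p
    simp [he, Finset.subtypeInsertEquivOption]
  have h2 : (pSub L (insert i Z)).submatrix e.symm e.symm
      = fromBlocks (pSub L Z) (Matrix.of fun a (_ : PUnit.{1}) => L a.1 i)
          (Matrix.of fun (_ : PUnit.{1}) b => L i b.1) (Matrix.of fun _ _ => L i i) := by
    ext a b
    cases a with
    | inl a => cases b with
      | inl b => simp [pSub, submatrix_apply, hinl]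
      | inr p => simp [pSub, submatrix_apply, hinl, hinr]
    | inr p => cases b with
      | inl b => simp [pSub, submatrix_apply, hinl, hinr]
      | inr q => simp [pSub, submatrix_apply, hinr]
  have hdet : IsUnit (pSub L Z).det := isUnit_iff_ne_zero.mpr (hsub Z).det_pos.ne'
  haveI : Invertible (pSub L Z) := (pSub L Z).invertibleOfIsUnitDet hdet
  rw [h1, h2, det_fromBlocks₁₁]
  congr 1
  rw [det_unique]
  simp only [Matrix.sub_apply, of_apply, invOf_eq_nonsing_inv]
  rw [schur]
  congr 1
  simp only [Matrix.mul_apply, dotProduct, mulVec, of_apply, uvec,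
    Finset.sum_mul, Finset.mul_sum]
  rw [Finset.sum_comm]
  refine Finset.sum_congr rfl fun a _ => Finset.sum_congr rfl fun b _ => ?_
  rw [hsym b.1 i]
  ring

lemma schur_mono {M : ℕ} {L : Matrix (Fin M) (Fin M) ℝ} (hL : L.PosDef)
    (i : Fin M) {Y Y' : Finset (Fin M)} (hYY' : Y ⊆ Y') :
    schur L i Y' ≤ schur L i Y := by
  have hsub := pSub_posDef hL
  set x₀ : Y → ℝ := -((pSub L Y)⁻¹ *ᵥ uvec L i Y) with hx₀def
  set v : Fin M → ℝ := fun j => if h : j ∈ Y then x₀ ⟨j, h⟩ else 0 with hvdef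
  have hv : ∀ j, j ∉ Y → v j = 0 := fun j hj => by simp [hvdef, hj]
  have hv' : ∀ j, j ∉ Y' → v j = 0 := fun j hj => hv j (fun h => hj (hYY' h))
  have hx₀ : x₀ = fun a : Y => v a.1 := by
    funext a
    simp [hvdef, a.2]
  have huY : uvec L i Y = fun a : Y => L i a.1 := rfl
  have huY' : uvec L i Y' = fun a : Y' => L i a.1 := rfl
  have h1 : schur L i Y'
      ≤ (fun a : Y' => v a.1) ⬝ᵥ (pSub L Y') *ᵥ (fun a : Y' => v a.1)
        + 2 * (uvec L i Y' ⬝ᵥ (fun a : Y' => v a.1)) + L i i := by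
    rw [schur]
    exact quad_ge (hsub Y') (uvec L i Y') (L i i) _
  have hquad : (fun a : Y' => v a.1) ⬝ᵥ (pSub L Y') *ᵥ (fun a : Y' => v a.1)
      = x₀ ⬝ᵥ (pSub L Y) *ᵥ x₀ := by
    rw [mulVec_restrict, sum2_ext L Y' v hv', ← sum2_ext L Y v hv, ← mulVec_restrict, hx₀]
  have hdot : uvec L i Y' ⬝ᵥ (fun a : Y' => v a.1) = uvec L i Y ⬝ᵥ x₀ := by
    rw [huY', dot_restrict, sum_ext Y' v hv' (fun j => L i j),
      ← sum_ext Y v hv (fun j => L i j), ← dot_restrict, hx₀]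
    rfl
  have h2 : x₀ ⬝ᵥ (pSub L Y) *ᵥ x₀ + 2 * (uvec L i Y ⬝ᵥ x₀) + L i i = schur L i Y := by
    rw [hx₀def, quad_eq (hsub Y) (uvec L i Y) (L i i), schur]
  calc schur L i Y' ≤ _ := h1
    _ = schur L i Y := by rw [hquad, hdot, h2]

lemma schur_pos {M : ℕ} {L : Matrix (Fin M) (Fin M) ℝ} (hL : L.PosDef)
    (i : Fin M) {Z : Finset (Fin M)} (hi : i ∉ Z) : 0 < schur L i Z := by
  have hsub := pSub_posDef hL
  have h := det_insert hL hsub i Z hi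
  have h1 : (0:ℝ) < (pSub L (insert i Z)).det := (hsub _).det_pos
  have h2 : (0:ℝ) < (pSub L Z).det := (hsub _).det_pos
  nlinarith

theorem logdet_submodular
    {M : ℕ} (L : Matrix (Fin M) (Fin M) ℝ) (hL : L.PosDef) :
    ∀ Y Y' : Finset (Fin M), Y ⊆ Y' → ∀ i : Fin M, i ∉ Y' →
      Real.log (pSub L (insert i Y')).det - Real.log (pSub L Y').det
        ≤ Real.log (pSub L (insert i Y)).det - Real.log (pSub L Y).det := by
  intro Y Y' hYY' i hi'
  have hi : i ∉ Y := fun h => hi' (hYY' h)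
  have hsub := pSub_posDef hL
  have key : ∀ (Z : Finset (Fin M)), i ∉ Z →
      Real.log (pSub L (insert i Z)).det - Real.log (pSub L Z).det
        = Real.log (schur L i Z) := by
    intro Z hiZ
    rw [det_insert hL hsub i Z hiZ,
      Real.log_mul (hsub Z).det_pos.ne' (schur_pos hL i hiZ).ne']
    ring
  rw [key Y' hi', key Y hi]
  exact Real.log_le_log (schur_pos hL i hi') (schur_mono hL i hYY')
end

section
/- Let L be positive semidefinite, Y a set with det(L_Y) > 0, and i ∉ Y with det(L_{Y∪{i}}) > 0. Modified marginal gain identity: for θ ∈ [0,1), α = θ/(2(1−θ)), relevance scores r ∈ ℝ^M, and kernel L' = Diag(exp(α r)) · S · Diag(exp(α r)), the quantity log det(L'_{Y∪{i}}) − log det(L'_Y) equals 2α r_i + log det(S_{Y∪{i}}) − log det(S_Y); in particular, maximizing this gain over i is equivalent to maximizing θ r_i + (1−θ)(log det(S_{Y∪{i}}) − log det(S_Y)). -/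
open Matrix

lemma pSub_det_conj {M : ℕ} (S : Matrix (Fin M) (Fin M) ℝ) (d : Fin M → ℝ)
    (Y : Finset (Fin M)) :
    (pSub (Matrix.diagonal d * S * Matrix.diagonal d) Y).det
      = (∏ a : Y, d a.1) ^ 2 * (pSub S Y).det := by
  have h : pSub (Matrix.diagonal d * S * Matrix.diagonal d) Y
      = Matrix.diagonal (fun a : Y => d a.1) * pSub S Y
          * Matrix.diagonal (fun a : Y => d a.1) := by
    ext a b
    simp [pSub, Matrix.mul_apply, Matrix.diagonal, Finset.mul_sum,
      Finset.sum_mul, mul_comm, mul_assoc]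
  rw [h, Matrix.det_mul, Matrix.det_mul, Matrix.det_diagonal]
  ring

theorem modified_marginal_gain_identity
    {M : ℕ} (S : Matrix (Fin M) (Fin M) ℝ) (hS : S.PosSemidef)
    (r : Fin M → ℝ) (θ : ℝ) (hθ0 : 0 ≤ θ) (hθ1 : θ < 1)
    (α : ℝ) (hα : α = θ / (2 * (1 - θ)))
    (L' : Matrix (Fin M) (Fin M) ℝ)
    (hL' : L' = Matrix.diagonal (fun i => Real.exp (α * r i)) * S *
        Matrix.diagonal (fun i => Real.exp (α * r i)))
    (Y : Finset (Fin M)) (i : Fin M) (hi : i ∉ Y)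
    (hSY : 0 < (pSub S Y).det) (hSYi : 0 < (pSub S (insert i Y)).det) :
    Real.log (pSub L' (insert i Y)).det - Real.log (pSub L' Y).det
      = 2 * α * r i + (Real.log (pSub S (insert i Y)).det - Real.log (pSub S Y).det)
    ∧ (1 - θ) * (Real.log (pSub L' (insert i Y)).det - Real.log (pSub L' Y).det)
      = θ * r i
        + (1 - θ) * (Real.log (pSub S (insert i Y)).det - Real.log (pSub S Y).det) := by
  have key : ∀ Z : Finset (Fin M), 0 < (pSub S Z).det →
      Real.log (pSub L' Z).det
        = 2 * α * (∑ j ∈ Z, r j) + Real.log (pSub S Z).det := by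
    intro Z hZ
    rw [hL', pSub_det_conj]
    have hp : (∏ a : Z, Real.exp (α * r a.1)) = Real.exp (α * ∑ j ∈ Z, r j) := by
      rw [← Real.exp_sum, Finset.mul_sum]
      congr 1
      exact Finset.sum_attach Z fun j => α * r j
    rw [hp, ← Real.exp_nat_mul, Real.log_mul (Real.exp_ne_zero _) (ne_of_gt hZ),
      Real.log_exp]
    ring
  have hsum : (∑ j ∈ insert i Y, r j) = r i + ∑ j ∈ Y, r j :=
    Finset.sum_insert hi
  have h1 : Real.log (pSub L' (insert i Y)).det - Real.log (pSub L' Y).det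
      = 2 * α * r i + (Real.log (pSub S (insert i Y)).det - Real.log (pSub S Y).det) := by
    rw [key _ hSYi, key _ hSY, hsum]; ring
  refine ⟨h1, ?_⟩
  rw [h1]
  have hθ : (1 - θ) ≠ 0 := by linarith
  have : (1 - θ) * (2 * α) = θ := by
    rw [hα]; field_simp
  linear_combination r i * this
end
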